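/- Let q be a power of an odd prime and let u ∈ SL_4(F_q) be a non-regular unipotent element, i.e., a matrix satisfying (u − I)³ = 0 (where I is the 4×4 identity matrix). Then there exists g ∈ SL_4(F_q) with g u g⁻¹ = u². -/

import Mathlib

open LinearMap Module Submodule

variable {F : Type} [Field F] {V : Type} [AddCommGroup V] [Module F V] [FiniteDimensional F V]

lemma finrank_le_map_add_ker (f : V →ₗ[F] V) (p : Submodule F V) :
    finrank F p ≤ finrank F (p.map f) + finrank F (ker f) := by
  have h := LinearMap.finrank_range_add_finrank_ker (f.domRestrict p)
  rw [LinearMap.range_domRestrict] at h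
  have hmem : ∀ c : ker (f.domRestrict p),
      (p.subtype ∘ₗ (ker (f.domRestrict p)).subtype) c ∈ ker f := by
    intro x
    obtain ⟨⟨y, hyp⟩, hy⟩ := x
    simp only [LinearMap.mem_ker, LinearMap.domRestrict_apply] at hy ⊢
    exact hy
  have h2 : finrank F (ker (f.domRestrict p)) ≤ finrank F (ker f) := by
    apply LinearMap.finrank_le_finrank_of_injective
      (f := LinearMap.codRestrict (ker f) (p.subtype ∘ₗ (ker (f.domRestrict p)).subtype) hmem)
    rw [← LinearMap.ker_eq_bot, LinearMap.ker_codRestrict, LinearMap.ker_eq_bot]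
    exact (Submodule.injective_subtype p).comp (Submodule.injective_subtype _)
  omega

lemma exists_notMem_of_finrank_lt {p q : Submodule F V} (h : finrank F q < finrank F p) :
    ∃ w ∈ p, w ∉ q := by
  by_contra hc
  push_neg at hc
  exact absurd (Submodule.finrank_mono (fun x hx => hc x hx)) (by omega)

lemma constr_diag_det (b : Basis (Fin 4) F V) (d : Fin 4 → F) :
    LinearMap.det (b.constr F (fun i => d i • b i)) = d 0 * d 1 * d 2 * d 3 := by
  rw [← LinearMap.det_toMatrix b]
  have : LinearMap.toMatrix b b (b.constr F (fun i => d i • b i)) = Matrix.diagonal d := by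
    ext i j
    rw [LinearMap.toMatrix_apply, Basis.constr_basis, map_smul, Basis.repr_self,
      Matrix.diagonal]
    by_cases h : i = j
    · simp [Finsupp.single_apply, h]
    · simp [Finsupp.single_apply, h, Ne.symm h]
  rw [this, Matrix.det_diagonal, Fin.prod_univ_four]

set_option linter.unusedSectionVars false

lemma exists_conj_two_smul (hdim : finrank F V = 4) (h2 : (2:F) ≠ 0)
    (f : V →ₗ[F] V) (hf : ∀ x, f (f (f x)) = 0) :
    ∃ e : V →ₗ[F] V, LinearMap.det e = 1 ∧ e ∘ₗ f = (2:F) • (f ∘ₗ e) := by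
  by_cases hf2 : ∀ x, f (f x) = 0
  · by_cases hf1 : ∀ x, f x = 0
    · refine ⟨LinearMap.id, LinearMap.det_id, ?_⟩
      ext x
      simp [hf1 x, hf1]
    · push_neg at hf1
      obtain ⟨v, hv⟩ := hf1
      -- case B : f ≠ 0, f² = 0
      have hrk : LinearMap.range f ≤ LinearMap.ker f := by
        rintro y ⟨x, rfl⟩
        exact hf2 x
      have hsum := LinearMap.finrank_range_add_finrank_ker f
      rw [hdim] at hsum
      have hrle : finrank F (LinearMap.range f) ≤ finrank F (LinearMap.ker f) :=
        Submodule.finrank_mono hrk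
      have hrpos : 1 ≤ finrank F (LinearMap.range f) := by
        have h1 : Submodule.span F {f v} ≤ LinearMap.range f := by
          rw [Submodule.span_singleton_le_iff_mem]
          exact ⟨v, rfl⟩
        have h3 := Submodule.finrank_mono h1
        rwa [finrank_span_singleton hv] at h3
      have hcard : Fintype.card (Fin 4) = finrank F V := by simp [hdim]
      have hr12 : finrank F (LinearMap.range f) = 2 ∨ finrank F (LinearMap.range f) = 1 := by
        omega
      rcases hr12 with hr | hr
      · -- Jordan type (2,2)
        set B : Basis (Fin 2) F (LinearMap.range f) := finBasisOfFinrankEq F _ hr with hBdef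
        obtain ⟨v1, hv1⟩ := (B 0).2
        obtain ⟨v2, hv2⟩ := (B 1).2
        have liB : LinearIndependent F (fun i : Fin 2 => ((B i : V))) :=
          B.linearIndependent.map' (LinearMap.range f).subtype (Submodule.ker_subtype _)
        have pairind : ∀ a c : F, a • ((B 0 : V)) + c • ((B 1 : V)) = 0 → a = 0 ∧ c = 0 := by
          intro a c h
          have hsum2 : ∑ i : Fin 2, (![a, c] : Fin 2 → F) i • ((B i : V)) = 0 := by
            rw [Fin.sum_univ_two]
            simpa using h
          have := Fintype.linearIndependent_iff.mp liB ![a, c] hsum2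
          exact ⟨this 0, this 1⟩
        have li : LinearIndependent F ![f v1, v1, f v2, v2] := by
          rw [Fintype.linearIndependent_iff]
          intro g hg
          rw [Fin.sum_univ_four] at hg
          simp only [Matrix.cons_val_zero, Matrix.cons_val_one, Matrix.head_cons,
            Matrix.cons_val_two, Matrix.tail_cons, Matrix.cons_val_three] at hg
          have a1 : g 1 • f v1 + g 3 • f v2 = 0 := by
            simpa [hf2 v1, hf2 v2] using congrArg f hg
          rw [hv1, hv2] at a1
          obtain ⟨hg1, hg3⟩ := pairind _ _ a1
          have a2 : g 0 • f v1 + g 2 • f v2 = 0 := by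
            rw [hg1, hg3] at hg
            simpa using hg
          rw [hv1, hv2] at a2
          obtain ⟨hg0, hg2⟩ := pairind _ _ a2
          intro i
          fin_cases i <;> assumption
        set b : Basis (Fin 4) F V := basisOfLinearIndependentOfCardEqFinrank li hcard with hbdef
        have hb : ⇑b = ![f v1, v1, f v2, v2] :=
          coe_basisOfLinearIndependentOfCardEqFinrank li hcard
        have hb0 : b 0 = f v1 := by rw [hb]; rfl
        have hb1 : b 1 = v1 := by rw [hb]; rfl
        have hb2 : b 2 = f v2 := by rw [hb]; rfl
        have hb3 : b 3 = v2 := by rw [hb]; rfl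
        set d : Fin 4 → F := ![1, 2⁻¹, 2, 1] with hddef
        refine ⟨b.constr F (fun i => d i • b i), ?_, ?_⟩
        · rw [constr_diag_det]
          show (1:F) * 2⁻¹ * 2 * 1 = 1
          field_simp
        · apply b.ext
          intro i
          fin_cases i
          · have l1 : f (b 0) = 0 := by rw [hb0]; exact hf2 v1
            show (b.constr F fun j => d j • b j) (f (b 0)) =
              (2:F) • f ((b.constr F fun j => d j • b j) (b 0))
            rw [l1, map_zero, Basis.constr_basis, map_smul, l1]
            simp
          · have l2 : f (b 1) = b 0 := by rw [hb1, hb0]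
            show (b.constr F fun j => d j • b j) (f (b 1)) =
              (2:F) • f ((b.constr F fun j => d j • b j) (b 1))
            rw [l2, Basis.constr_basis, Basis.constr_basis, map_smul, l2, smul_smul]
            simp [hddef, mul_inv_cancel₀ h2]
          · have l3 : f (b 2) = 0 := by rw [hb2]; exact hf2 v2
            show (b.constr F fun j => d j • b j) (f (b 2)) =
              (2:F) • f ((b.constr F fun j => d j • b j) (b 2))
            rw [l3, map_zero, Basis.constr_basis, map_smul, l3]
            simp
          · have l4 : f (b 3) = b 2 := by rw [hb3, hb2]
            show (b.constr F fun j => d j • b j) (f (b 3)) =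
              (2:F) • f ((b.constr F fun j => d j • b j) (b 3))
            rw [l4, Basis.constr_basis, Basis.constr_basis, map_smul, l4, smul_smul]
            simp [hddef]
      · -- Jordan type (2,1,1)
        have hk3 : finrank F (LinearMap.ker f) = 3 := by omega
        have hfvker : f v ∈ LinearMap.ker f := hf2 v
        obtain ⟨w1, hw1ker, hw1span⟩ :=
          exists_notMem_of_finrank_lt (p := LinearMap.ker f) (q := Submodule.span F {f v})
            (by rw [finrank_span_singleton hv]; omega)
        have hspan2 : finrank F (Submodule.span F ({f v, w1} : Set V)) ≤ 2 := by
          have : Submodule.span F ({f v, w1} : Set V) =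
              Submodule.span F {f v} ⊔ Submodule.span F {w1} := by
            rw [Submodule.span_insert]
          rw [this]
          have h4 := Submodule.finrank_add_le_finrank_add_finrank
            (Submodule.span F {f v}) (Submodule.span F {w1})
          have h5 : finrank F (Submodule.span F ({w1} : Set V)) ≤ 1 := by
            by_cases hw1 : w1 = 0
            · rw [hw1, Submodule.span_zero_singleton, finrank_bot]
              omega
            · rw [finrank_span_singleton hw1]
          rw [finrank_span_singleton hv] at h4
          omega
        obtain ⟨w2, hw2ker, hw2span⟩ :=
          exists_notMem_of_finrank_lt (p := LinearMap.ker f)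
            (q := Submodule.span F ({f v, w1} : Set V)) (by omega)
        have hw1 : f w1 = 0 := hw1ker
        have hw2 : f w2 = 0 := hw2ker
        have li : LinearIndependent F ![f v, v, w1, w2] := by
          rw [Fintype.linearIndependent_iff]
          intro g hg
          rw [Fin.sum_univ_four] at hg
          simp only [Matrix.cons_val_zero, Matrix.cons_val_one, Matrix.head_cons,
            Matrix.cons_val_two, Matrix.tail_cons, Matrix.cons_val_three] at hg
          have a1 : g 1 • f v = 0 := by
            simpa [hf2 v, hw1, hw2] using congrArg f hg
          have hg1 : g 1 = 0 := (smul_eq_zero.mp a1).resolve_right hv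
          have hg' : g 0 • f v + g 2 • w1 + g 3 • w2 = 0 := by
            rw [hg1] at hg
            simpa using hg
          have hg3 : g 3 = 0 := by
            by_contra h3
            apply hw2span
            have hβ : g 3 • w2 = -(g 0 • f v + g 2 • w1) := eq_neg_of_add_eq_zero_right hg'
            rw [← inv_smul_smul₀ h3 w2, hβ]
            refine Submodule.smul_mem _ _ (Submodule.neg_mem _ (Submodule.add_mem _ ?_ ?_))
            · exact Submodule.smul_mem _ _ (Submodule.subset_span (by simp))
            · exact Submodule.smul_mem _ _ (Submodule.subset_span (by simp))
          have hg2 : g 2 = 0 := by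
            by_contra h3
            apply hw1span
            have hγ : g 0 • f v + g 2 • w1 = 0 := by
              rw [hg3] at hg'
              simpa using hg'
            have hβ : g 2 • w1 = -(g 0 • f v) := eq_neg_of_add_eq_zero_right hγ
            rw [← inv_smul_smul₀ h3 w1, hβ]
            exact Submodule.smul_mem _ _ (Submodule.neg_mem _
              (Submodule.smul_mem _ _ (Submodule.subset_span rfl)))
          have hg0 : g 0 = 0 := by
            have : g 0 • f v = 0 := by
              rw [hg2, hg3] at hg'
              simpa using hg'
            exact (smul_eq_zero.mp this).resolve_right hv
          intro i
          fin_cases i <;> assumption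
        set b : Basis (Fin 4) F V := basisOfLinearIndependentOfCardEqFinrank li hcard with hbdef
        have hb : ⇑b = ![f v, v, w1, w2] :=
          coe_basisOfLinearIndependentOfCardEqFinrank li hcard
        have hb0 : b 0 = f v := by rw [hb]; rfl
        have hb1 : b 1 = v := by rw [hb]; rfl
        have hb2 : b 2 = w1 := by rw [hb]; rfl
        have hb3 : b 3 = w2 := by rw [hb]; rfl
        set d : Fin 4 → F := ![2, 1, 1, 2⁻¹] with hddef
        refine ⟨b.constr F (fun i => d i • b i), ?_, ?_⟩
        · rw [constr_diag_det]
          show (2:F) * 1 * 1 * 2⁻¹ = 1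
          field_simp
        · apply b.ext
          intro i
          fin_cases i
          · have l1 : f (b 0) = 0 := by rw [hb0]; exact hf2 v
            show (b.constr F fun j => d j • b j) (f (b 0)) =
              (2:F) • f ((b.constr F fun j => d j • b j) (b 0))
            rw [l1, map_zero, Basis.constr_basis, map_smul, l1]
            simp
          · have l2 : f (b 1) = b 0 := by rw [hb1, hb0]
            show (b.constr F fun j => d j • b j) (f (b 1)) =
              (2:F) • f ((b.constr F fun j => d j • b j) (b 1))
            rw [l2, Basis.constr_basis, Basis.constr_basis, map_smul, l2, smul_smul]
            simp [hddef]
          · have l3 : f (b 2) = 0 := by rw [hb2]; exact hw1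
            show (b.constr F fun j => d j • b j) (f (b 2)) =
              (2:F) • f ((b.constr F fun j => d j • b j) (b 2))
            rw [l3, map_zero, Basis.constr_basis, map_smul, l3]
            simp
          · have l4 : f (b 3) = 0 := by rw [hb3]; exact hw2
            show (b.constr F fun j => d j • b j) (f (b 3)) =
              (2:F) • f ((b.constr F fun j => d j • b j) (b 3))
            rw [l4, map_zero, Basis.constr_basis, map_smul, l4]
            simp
  · push_neg at hf2
    obtain ⟨v, hv⟩ := hf2
    -- case A : Jordan type (3,1)
    -- step 1: 2 ≤ finrank (ker f)
    have hrange : Submodule.map f (LinearMap.range f) ≤ LinearMap.ker f := by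
      rintro y ⟨x, hx, rfl⟩
      obtain ⟨z, rfl⟩ := hx
      exact hf z
    have hk2 : 2 ≤ finrank F (LinearMap.ker f) := by
      have h1 := finrank_le_map_add_ker f (LinearMap.range f)
      have h2' := finrank_le_map_add_ker f (⊤ : Submodule F V)
      rw [Submodule.map_top] at h2'
      have h3 : finrank F (Submodule.map f (LinearMap.range f)) ≤
          finrank F (LinearMap.ker f) := Submodule.finrank_mono hrange
      have h4 : finrank F (⊤ : Submodule F V) = 4 := by rw [finrank_top, hdim]
      omega
    -- step 2: get w
    have hv2mem : f (f v) ∈ LinearMap.ker f := hf v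
    have hspan1 : finrank F (Submodule.span F {f (f v)}) = 1 := finrank_span_singleton hv
    obtain ⟨w, hwker, hwspan⟩ :=
      exists_notMem_of_finrank_lt (p := LinearMap.ker f)
        (q := Submodule.span F {f (f v)}) (by omega)
    have hw : f w = 0 := hwker
    -- step 3: linear independence
    have li : LinearIndependent F ![f (f v), f v, v, w] := by
      rw [Fintype.linearIndependent_iff]
      intro g hg
      rw [Fin.sum_univ_four] at hg
      simp only [Matrix.cons_val_zero, Matrix.cons_val_one, Matrix.head_cons,
        Matrix.cons_val_two, Matrix.tail_cons, Matrix.cons_val_three] at hg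
      have a1 : g 1 • f (f v) + g 2 • f v = 0 := by
        simpa [hf v, hw] using congrArg f hg
      have a2 : g 2 • f (f v) = 0 := by
        simpa [hf v] using congrArg f a1
      have hg2 : g 2 = 0 := (smul_eq_zero.mp a2).resolve_right hv
      have hg1 : g 1 = 0 := by
        have : g 1 • f (f v) = 0 := by simpa [hg2] using a1
        exact (smul_eq_zero.mp this).resolve_right hv
      have hg' : g 0 • f (f v) + g 3 • w = 0 := by
        have := hg
        rw [hg1, hg2] at this
        simpa using this
      have hg3 : g 3 = 0 := by
        by_contra h3
        apply hwspan
        rw [Submodule.mem_span_singleton]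
        refine ⟨-((g 3)⁻¹ * g 0), ?_⟩
        have hβ : g 3 • w = -(g 0 • f (f v)) := eq_neg_of_add_eq_zero_right hg'
        calc (-((g 3)⁻¹ * g 0)) • f (f v) = (g 3)⁻¹ • -(g 0 • f (f v)) := by
              rw [smul_neg, smul_smul, neg_smul]
          _ = (g 3)⁻¹ • (g 3 • w) := by rw [hβ]
          _ = w := inv_smul_smul₀ h3 w
      have hg0 : g 0 = 0 := by
        have : g 0 • f (f v) = 0 := by simpa [hg3] using hg'
        exact (smul_eq_zero.mp this).resolve_right hv
      intro i
      fin_cases i <;> assumption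
    -- step 4: build the conjugating map
    have hcard : Fintype.card (Fin 4) = finrank F V := by simp [hdim]
    set b : Basis (Fin 4) F V := basisOfLinearIndependentOfCardEqFinrank li hcard with hbdef
    have hb : ⇑b = ![f (f v), f v, v, w] := coe_basisOfLinearIndependentOfCardEqFinrank li hcard
    have hb0 : b 0 = f (f v) := by rw [hb]; rfl
    have hb1 : b 1 = f v := by rw [hb]; rfl
    have hb2 : b 2 = v := by rw [hb]; rfl
    have hb3 : b 3 = w := by rw [hb]; rfl
    set d : Fin 4 → F := ![2, 1, 2⁻¹, 1] with hddef
    refine ⟨b.constr F (fun i => d i • b i), ?_, ?_⟩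
    · rw [constr_diag_det]
      show (2:F) * 1 * 2⁻¹ * 1 = 1
      field_simp
    · apply b.ext
      intro i
      fin_cases i
      · have l1 : f (b 0) = 0 := by rw [hb0]; exact hf v
        show (b.constr F fun j => d j • b j) (f (b 0)) =
          (2:F) • f ((b.constr F fun j => d j • b j) (b 0))
        rw [l1, map_zero, Basis.constr_basis, map_smul, l1]
        simp
      · have l2 : f (b 1) = b 0 := by rw [hb1, hb0]
        show (b.constr F fun j => d j • b j) (f (b 1)) =
          (2:F) • f ((b.constr F fun j => d j • b j) (b 1))
        rw [l2, Basis.constr_basis, Basis.constr_basis, map_smul, l2, smul_smul]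
        simp [hddef]
      · have l3 : f (b 2) = b 1 := by rw [hb2, hb1]
        show (b.constr F fun j => d j • b j) (f (b 2)) =
          (2:F) • f ((b.constr F fun j => d j • b j) (b 2))
        rw [l3, Basis.constr_basis, Basis.constr_basis, map_smul, l3, smul_smul]
        simp [hddef, mul_inv_cancel₀ h2]
      · have l4 : f (b 3) = 0 := by rw [hb3]; exact hw
        show (b.constr F fun j => d j • b j) (f (b 3)) =
          (2:F) • f ((b.constr F fun j => d j • b j) (b 3))
        rw [l4, map_zero, Basis.constr_basis, map_smul, l4]
        simp

lemma exists_matrix_conj (h2 : (2:F) ≠ 0) (Z : Matrix (Fin 4) (Fin 4) F) (hZ : Z * Z * Z = 0) :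
    ∃ g : Matrix (Fin 4) (Fin 4) F, g.det = 1 ∧ g * Z = (2:F) • (Z * g) := by
  have hdim : finrank F (Fin 4 → F) = 4 := by simp
  set f := Matrix.toLin' Z with hfdef
  have hf : ∀ x, f (f (f x)) = 0 := by
    intro x
    have h1 : Matrix.toLin' (Z * Z * Z) = f ∘ₗ (f ∘ₗ f) := by
      rw [Matrix.toLin'_mul, Matrix.toLin'_mul, hfdef, LinearMap.comp_assoc]
    have h2' := congrArg (fun (φ : (Fin 4 → F) →ₗ[F] (Fin 4 → F)) => φ x) h1
    simp only [hZ, map_zero, LinearMap.zero_apply, LinearMap.comp_apply] at h2'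
    exact h2'.symm
  obtain ⟨e, hdet, hrel⟩ := exists_conj_two_smul hdim h2 f hf
  refine ⟨LinearMap.toMatrix' e, ?_, ?_⟩
  · rw [LinearMap.det_toMatrix']
    exact hdet
  · have h3 := congrArg (LinearMap.toMatrix' (R := F)) hrel
    rw [LinearMap.toMatrix'_comp, map_smul, LinearMap.toMatrix'_comp,
      LinearMap.toMatrix'_toLin'] at h3
    exact h3

/-- Let `q` be a power of an odd prime and `u ∈ SL₄(F_q)` a non-regular
unipotent element, i.e. `(u - I)³ = 0`. Then `u` is conjugate in `SL₄(F_q)` to `u²`. -/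
theorem SL4_nonregular_unipotent_conj_sq
    {F : Type} [Field F] [Fintype F]
    (hq : ∃ p k : ℕ, p.Prime ∧ Odd p ∧ 0 < k ∧ Fintype.card F = p ^ k)
    (u : Matrix.SpecialLinearGroup (Fin 4) F)
    (hu : ((u : Matrix (Fin 4) (Fin 4) F) - 1) ^ 3 = 0) :
    ∃ g : Matrix.SpecialLinearGroup (Fin 4) F, g * u * g⁻¹ = u ^ 2 := by
  obtain ⟨p, k, hp, hodd, hk, hcard⟩ := hq
  have h2 : (2:F) ≠ 0 := by
    intro h20
    have hr : ringChar F ∣ 2 := (ringChar.spec F 2).mp (by exact_mod_cast h20)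
    have hprime : (ringChar F).Prime := CharP.char_is_prime F (ringChar F)
    have hrc2 : ringChar F = 2 := (Nat.prime_dvd_prime_iff_eq hprime Nat.prime_two).mp hr
    obtain ⟨n, hp', hcard'⟩ := FiniteField.card F (ringChar F)
    rw [hrc2] at hcard'
    have hdvd : p ∣ 2 ^ (n:ℕ) := by
      rw [← hcard', hcard]
      exact dvd_pow_self p hk.ne'
    have : p ∣ 2 := hp.dvd_of_dvd_pow hdvd
    have hp2 : p = 2 := (Nat.prime_dvd_prime_iff_eq hp Nat.prime_two).mp this
    rw [hp2] at hodd
    exact (Nat.not_odd_iff_even.mpr (by norm_num)) hodd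
  set U : Matrix (Fin 4) (Fin 4) F := ↑u with hUdef
  set Y : Matrix (Fin 4) (Fin 4) F := U - 1 with hYdef
  have hY3 : Y * Y * Y = 0 := by
    have h := hu
    rw [pow_succ, sq] at h
    exact h
  set c : F := 2⁻¹ with hcdef
  have h2c : (2:F) * c = 1 := mul_inv_cancel₀ h2
  set Z : Matrix (Fin 4) (Fin 4) F := Y - c • (Y * Y) with hZdef
  have hYassoc : Y * (Y * Y) = 0 := by rw [← mul_assoc]; exact hY3
  have hZZ : Z * Z = Y * Y := by
    rw [hZdef]
    simp only [sub_mul, mul_sub, smul_mul_assoc, mul_smul_comm, smul_smul, mul_assoc,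
      hYassoc, smul_zero, mul_zero, zero_mul, sub_zero, zero_sub, neg_zero]
  have hZ3 : Z * Z * Z = 0 := by
    rw [hZZ, hZdef]
    simp only [mul_sub, mul_smul_comm, mul_assoc, hYassoc, smul_zero, mul_zero, sub_zero,
      zero_sub, neg_zero, sub_self]
  obtain ⟨g, hgdet, hg1⟩ := exists_matrix_conj h2 Z hZ3
  have hgx : ∀ x : Matrix (Fin 4) (Fin 4) F, g * (Z * x) = (2:F) • (Z * (g * x)) := by
    intro x
    rw [← mul_assoc, hg1, smul_mul_assoc, mul_assoc]
  have hZx : ∀ x : Matrix (Fin 4) (Fin 4) F, Z * (Z * (Z * x)) = 0 := by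
    intro x
    rw [show Z * (Z * (Z * x)) = Z * Z * Z * x by rw [mul_assoc, mul_assoc], hZ3, zero_mul]
  have hUZ : U = 1 + Z + c • (Z * Z) := by
    rw [hZZ, hZdef, hYdef]
    abel
  have key : g * U = U * U * g := by
    rw [hUZ]
    simp only [mul_add, add_mul, mul_one, one_mul, mul_smul_comm, smul_mul_assoc,
      mul_assoc, hg1, hgx, hZx, smul_smul, smul_zero, mul_zero, zero_mul, add_zero,
      zero_add, smul_add]
    simp only [hcdef]
    match_scalars
    all_goals try field_simp
    all_goals ring
  let G : Matrix.SpecialLinearGroup (Fin 4) F := ⟨g, hgdet⟩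
  refine ⟨G, ?_⟩
  rw [mul_inv_eq_iff_eq_mul]
  apply Subtype.ext
  show g * U = ((u ^ 2 : Matrix.SpecialLinearGroup (Fin 4) F) : Matrix (Fin 4) (Fin 4) F) * g
  rw [Matrix.SpecialLinearGroup.coe_pow, sq]
  rw [key, hUdef]
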